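/- Let f be analytic on the punctured unit disc E = {z : 0 < |z| < 1} with a simple pole at 0, and suppose α ≥ 1 and Re(z f(z)) > α |z² f'(z) + z f(z)| for all z ∈ E. Then |z f'(z)/f(z) + 1| < 1/α for all z ∈ E (in particular f(z) ≠ 0 on E). -/

import Mathlib

open Complex Metric

theorem stmt0 (α : ℝ) (hα : 1 ≤ α) (g : ℂ → ℂ)
    (hg : AnalyticOn ℂ g (ball (0:ℂ) 1))
    (f : ℂ → ℂ) (hf : ∀ z : ℂ, z ≠ 0 → f z = z⁻¹ + g z)
    (hME : ∀ z : ℂ, 0 < ‖z‖ → ‖z‖ < 1 →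
      (z * f z).re > α * ‖z ^ 2 * deriv f z + z * f z‖) :
    ∀ z : ℂ, 0 < ‖z‖ → ‖z‖ < 1 →
      f z ≠ 0 ∧ ‖z * deriv f z / f z + 1‖ < 1 / α := by
  intro z hz0 hz1
  have hαpos : (0:ℝ) < α := lt_of_lt_of_le one_pos hα
  have hA : α * ‖z ^ 2 * deriv f z + z * f z‖ < (z * f z).re := hME z hz0 hz1
  have hAnn : 0 ≤ α * ‖z ^ 2 * deriv f z + z * f z‖ :=
    mul_nonneg hαpos.le (norm_nonneg _)
  have hre : 0 < (z * f z).re := lt_of_le_of_lt hAnn hA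
  have hzfne : z * f z ≠ 0 := by
    intro h
    rw [h] at hre
    simp at hre
  have hzne : z ≠ 0 := by
    intro h
    exact hzfne (by rw [h]; ring)
  have hfne : f z ≠ 0 := fun h => hzfne (by rw [h]; ring)
  refine ⟨hfne, ?_⟩
  have hB : (z * f z).re ≤ ‖z * f z‖ := Complex.re_le_norm _
  have hBpos : 0 < ‖z * f z‖ := lt_of_lt_of_le hre hB
  have heq : z * deriv f z / f z + 1 = (z ^ 2 * deriv f z + z * f z) / (z * f z) := by
    field_simp
  rw [heq, norm_div]
  rw [div_lt_div_iff₀ hBpos hαpos]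
  calc ‖z ^ 2 * deriv f z + z * f z‖ * α
      = α * ‖z ^ 2 * deriv f z + z * f z‖ := by ring
    _ < (z * f z).re := hA
    _ ≤ ‖z * f z‖ := hB
    _ = 1 * ‖z * f z‖ := by ring
  done
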